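/- Let k be a field and A, B, C be n×n matrices over k. Then the following are equivalent: (i) for all n×n matrices X, Y, Z one has Tr(X·[B,C]) + Tr(A·[Y,C] + A·[B,Z]) = 0; (ii) [A,B] = [B,C] = [C,A] = 0. -/

import Mathlib

open Matrix

lemma trace_all_zero {k : Type*} [Field k] {n : ℕ} {M : Matrix (Fin n) (Fin n) k}
    (h : ∀ X : Matrix (Fin n) (Fin n) k, (X * M).trace = 0) : M = 0 := by
  ext i j
  have := h (Matrix.single j i 1)
  rw [Matrix.trace] at this
  simpa [Matrix.diag, Matrix.mul_apply, Matrix.single, ite_and,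
    Finset.sum_ite_eq, Finset.sum_ite_eq'] using this

lemma tc {k : Type*} [Field k] {n : ℕ} (P Q R : Matrix (Fin n) (Fin n) k) :
    (P * Q * R).trace = (Q * R * P).trace := (Matrix.trace_mul_cycle Q R P).symm

/-- `(A,B,C)` is a critical point of `Tr A[B,C]` iff `A`, `B`, `C` pairwise commute. -/
theorem stmt_4 (k : Type*) [Field k] (n : ℕ)
    (A B C : Matrix (Fin n) (Fin n) k) :
    (∀ X Y Z : Matrix (Fin n) (Fin n) k,
        (X * (B * C - C * B)).trace +
          (A * (Y * C - C * Y) + A * (B * Z - Z * B)).trace = 0) ↔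
      (A * B - B * A = 0 ∧ B * C - C * B = 0 ∧ C * A - A * C = 0) := by
  constructor
  · intro h
    have hBC : B * C - C * B = 0 := by
      apply trace_all_zero
      intro X
      have := h X 0 0
      simpa using this
    have hCA : C * A - A * C = 0 := by
      apply trace_all_zero
      intro Y
      have := h 0 Y 0
      have e : (A * (Y * C - C * Y)).trace = (Y * (C * A - A * C)).trace := by
        simp only [Matrix.mul_sub, Matrix.sub_mul, Matrix.trace_sub, ← Matrix.mul_assoc]
        rw [tc A Y C, tc A C Y, tc C Y A]
      rw [← e]
      simpa using this
    have hAB : A * B - B * A = 0 := by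
      apply trace_all_zero
      intro Z
      have := h 0 0 Z
      have e : (A * (B * Z - Z * B)).trace = (Z * (A * B - B * A)).trace := by
        simp only [Matrix.mul_sub, Matrix.sub_mul, Matrix.trace_sub, ← Matrix.mul_assoc]
        rw [tc A B Z, tc B Z A, tc A Z B]
      rw [← e]
      simpa using this
    exact ⟨hAB, hBC, hCA⟩
  · rintro ⟨hAB, hBC, hCA⟩ X Y Z
    rw [hBC]
    have e1 : (A * (Y * C - C * Y)).trace = (Y * (C * A - A * C)).trace := by
      simp only [Matrix.mul_sub, Matrix.sub_mul, Matrix.trace_sub, ← Matrix.mul_assoc]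
      rw [tc A Y C, tc A C Y, tc C Y A]
    have e2 : (A * (B * Z - Z * B)).trace = (Z * (A * B - B * A)).trace := by
      simp only [Matrix.mul_sub, Matrix.sub_mul, Matrix.trace_sub, ← Matrix.mul_assoc]
      rw [tc A B Z, tc B Z A, tc A Z B]
    rw [Matrix.trace_add, e1, e2, hAB, hCA]
    simp
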